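/- For real parameters p and q > 0 and constant c > 0, the function v(x,y,t) = 2q² / cosh²[ q( x - (q² - 3p² - y²/48 - py/2) t - (1/(2q)) ln(c/(2q)) ) ] is a solution of the Johnson equation JE-I (with α² = -1): (v_t + (1/4)v_xxx + (3/2)v v_x + v/(2t))_x = (12/t²) v_yy, for t > 0. -/

import Mathlib

/-- Partial derivative in the first variable. -/
noncomputable def pd1 (u : ℝ → ℝ → ℝ → ℝ) (x y t : ℝ) : ℝ := deriv (fun s => u s y t) x
/-- Partial derivative in the second variable. -/
noncomputable def pd2 (u : ℝ → ℝ → ℝ → ℝ) (x y t : ℝ) : ℝ := deriv (fun s => u x s t) y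
/-- Partial derivative in the third variable. -/
noncomputable def pd3 (u : ℝ → ℝ → ℝ → ℝ) (x y t : ℝ) : ℝ := deriv (fun s => u x y s) t

/-- The one-soliton solution of the Johnson equation JE-I. -/
noncomputable def oneSoliton (p q c : ℝ) : ℝ → ℝ → ℝ → ℝ := fun x y t =>
  2 * q^2 / (Real.cosh (q * (x - (q^2 - 3*p^2 - y^2/48 - p*y/2) * t
      - (1/(2*q)) * Real.log (c/(2*q)))))^2



noncomputable def JG (q s : ℝ) : ℝ := 2*q^2/(Real.cosh s)^2
noncomputable def JG1 (q s : ℝ) : ℝ := -4*q^2*Real.sinh s/(Real.cosh s)^3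
noncomputable def JG2 (q s : ℝ) : ℝ :=
  -4*q^2*((Real.cosh s)^2 - 3*(Real.sinh s)^2)/(Real.cosh s)^4
noncomputable def JG3 (q s : ℝ) : ℝ :=
  16*q^2*(2*Real.sinh s*(Real.cosh s)^2 - 3*(Real.sinh s)^3)/(Real.cosh s)^5
noncomputable def JG4 (q s : ℝ) : ℝ :=
  16*q^2*(2*(Real.cosh s)^4 - 15*(Real.cosh s)^2*(Real.sinh s)^2
    + 15*(Real.sinh s)^4)/(Real.cosh s)^6

lemma hasDerivAt_JG (q s : ℝ) : HasDerivAt (fun s => JG q s) (JG1 q s) s := by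
  have hC : Real.cosh s ≠ 0 := (Real.cosh_pos s).ne'
  have hden : HasDerivAt (fun s => (Real.cosh s)^2)
      ((2:ℕ) * (Real.cosh s)^1 * Real.sinh s) s := (Real.hasDerivAt_cosh s).pow 2
  have := (hasDerivAt_const s (2*q^2)).div hden (pow_ne_zero 2 hC)
  refine this.congr_deriv ?_
  unfold JG1
  field_simp
  ring

lemma hasDerivAt_JG1 (q s : ℝ) : HasDerivAt (fun s => JG1 q s) (JG2 q s) s := by
  have hC : Real.cosh s ≠ 0 := (Real.cosh_pos s).ne'
  have hnum : HasDerivAt (fun s => -4*q^2*Real.sinh s) (-4*q^2*Real.cosh s) s :=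
    (Real.hasDerivAt_sinh s).const_mul _
  have hden : HasDerivAt (fun s => (Real.cosh s)^3)
      ((3:ℕ) * (Real.cosh s)^2 * Real.sinh s) s := (Real.hasDerivAt_cosh s).pow 3
  have := hnum.div hden (pow_ne_zero 3 hC)
  refine this.congr_deriv ?_
  unfold JG2
  field_simp
  ring

lemma hasDerivAt_JG2 (q s : ℝ) : HasDerivAt (fun s => JG2 q s) (JG3 q s) s := by
  have hC : Real.cosh s ≠ 0 := (Real.cosh_pos s).ne'
  have hc2 : HasDerivAt (fun s => (Real.cosh s)^2)
      ((2:ℕ) * (Real.cosh s)^1 * Real.sinh s) s := (Real.hasDerivAt_cosh s).pow 2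
  have hs2 : HasDerivAt (fun s => (Real.sinh s)^2)
      ((2:ℕ) * (Real.sinh s)^1 * Real.cosh s) s := (Real.hasDerivAt_sinh s).pow 2
  have hnum : HasDerivAt (fun s => -4*q^2*((Real.cosh s)^2 - 3*(Real.sinh s)^2))
      (-4*q^2*((2:ℕ) * (Real.cosh s)^1 * Real.sinh s
        - 3*((2:ℕ) * (Real.sinh s)^1 * Real.cosh s))) s :=
    (hc2.sub (hs2.const_mul 3)).const_mul _
  have hden : HasDerivAt (fun s => (Real.cosh s)^4)
      ((4:ℕ) * (Real.cosh s)^3 * Real.sinh s) s := (Real.hasDerivAt_cosh s).pow 4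
  have := hnum.div hden (pow_ne_zero 4 hC)
  refine this.congr_deriv ?_
  unfold JG3
  field_simp
  ring

lemma hasDerivAt_JG3 (q s : ℝ) : HasDerivAt (fun s => JG3 q s) (JG4 q s) s := by
  have hC : Real.cosh s ≠ 0 := (Real.cosh_pos s).ne'
  have hc2 : HasDerivAt (fun s => (Real.cosh s)^2)
      ((2:ℕ) * (Real.cosh s)^1 * Real.sinh s) s := (Real.hasDerivAt_cosh s).pow 2
  have hs3 : HasDerivAt (fun s => (Real.sinh s)^3)
      ((3:ℕ) * (Real.sinh s)^2 * Real.cosh s) s := (Real.hasDerivAt_sinh s).pow 3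
  have hprod : HasDerivAt (fun s => 2*Real.sinh s*(Real.cosh s)^2)
      ((2*Real.cosh s)*(Real.cosh s)^2
        + 2*Real.sinh s*((2:ℕ) * (Real.cosh s)^1 * Real.sinh s)) s :=
    ((Real.hasDerivAt_sinh s).const_mul 2).mul hc2
  have hnum : HasDerivAt
      (fun s => 16*q^2*(2*Real.sinh s*(Real.cosh s)^2 - 3*(Real.sinh s)^3))
      (16*q^2*(((2*Real.cosh s)*(Real.cosh s)^2
        + 2*Real.sinh s*((2:ℕ) * (Real.cosh s)^1 * Real.sinh s))
        - 3*((3:ℕ) * (Real.sinh s)^2 * Real.cosh s))) s :=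
    (hprod.sub (hs3.const_mul 3)).const_mul _
  have hden : HasDerivAt (fun s => (Real.cosh s)^5)
      ((5:ℕ) * (Real.cosh s)^4 * Real.sinh s) s := (Real.hasDerivAt_cosh s).pow 5
  have := hnum.div hden (pow_ne_zero 5 hC)
  refine this.congr_deriv ?_
  unfold JG4
  field_simp
  ring

noncomputable def JTh (p q c x y t : ℝ) : ℝ :=
  q * (x - (q^2 - 3*p^2 - y^2/48 - p*y/2) * t - (1/(2*q)) * Real.log (c/(2*q)))

lemma os_eq (p q c x y t : ℝ) :
    oneSoliton p q c x y t = JG q (JTh p q c x y t) := by rfl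

lemma hTh1 (p q c y t : ℝ) (x : ℝ) :
    HasDerivAt (fun x => JTh p q c x y t) q x := by
  have := (((hasDerivAt_id x).sub_const ((q^2 - 3*p^2 - y^2/48 - p*y/2) * t)).sub_const
      ((1/(2*q)) * Real.log (c/(2*q)))).const_mul q
  simpa [JTh] using this

lemma hTh2 (p q c x t : ℝ) (y : ℝ) :
    HasDerivAt (fun y => JTh p q c x y t) (q*t*(y/24 + p/2)) y := by
  have hy2 : HasDerivAt (fun y : ℝ => y^2) (2*y) y := by
    simpa using hasDerivAt_pow 2 y
  have hpy : HasDerivAt (fun y : ℝ => p*y) p y := by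
    simpa using (hasDerivAt_id y).const_mul p
  have hA : HasDerivAt (fun y : ℝ => q^2 - 3*p^2 - y^2/48 - p*y/2)
      (0 - 2*y/48 - p/2) y :=
    ((hasDerivAt_const y (q^2 - 3*p^2)).sub (hy2.div_const 48)).sub (hpy.div_const 2)
  have := (((hasDerivAt_const y x).sub (hA.mul_const t)).sub_const
      ((1/(2*q)) * Real.log (c/(2*q)))).const_mul q
  have h2 : HasDerivAt (fun y => JTh p q c x y t)
      (q * (0 - (0 - 2*y/48 - p/2) * t - 0)) y := by
    simpa [JTh] using this
  convert h2 using 1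
  ring

lemma hTh3 (p q c x y : ℝ) (t : ℝ) :
    HasDerivAt (fun t => JTh p q c x y t)
      (-(q * (q^2 - 3*p^2 - y^2/48 - p*y/2))) t := by
  have := (((hasDerivAt_const t x).sub
      ((hasDerivAt_id t).const_mul (q^2 - 3*p^2 - y^2/48 - p*y/2))).sub_const
      ((1/(2*q)) * Real.log (c/(2*q)))).const_mul q
  have h2 : HasDerivAt (fun t => JTh p q c x y t)
      (q * (0 - (q^2 - 3*p^2 - y^2/48 - p*y/2) * 1 - 0)) t := by
    simpa [JTh] using this
  convert h2 using 1
  ring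

lemma pd1_os (p q c : ℝ) : ∀ x y t : ℝ,
    pd1 (oneSoliton p q c) x y t = q * JG1 q (JTh p q c x y t) := by
  intro x y t
  have h := ((hasDerivAt_JG q (JTh p q c x y t)).comp x (hTh1 p q c y t x)).deriv
  unfold pd1
  exact h.trans (mul_comm _ _)

lemma pd11_os (p q c : ℝ) : ∀ x y t : ℝ,
    pd1 (pd1 (oneSoliton p q c)) x y t = q^2 * JG2 q (JTh p q c x y t) := by
  intro x y t
  have hfun : (fun s => pd1 (oneSoliton p q c) s y t)
      = fun s => q * JG1 q (JTh p q c s y t) := funext fun s => pd1_os p q c s y t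
  rw [show pd1 (pd1 (oneSoliton p q c)) x y t
      = deriv (fun s => pd1 (oneSoliton p q c) s y t) x from rfl, hfun]
  have h := (((hasDerivAt_JG1 q (JTh p q c x y t)).comp x
      (hTh1 p q c y t x)).const_mul q).deriv
  exact h.trans (by ring)

lemma pd111_os (p q c : ℝ) : ∀ x y t : ℝ,
    pd1 (pd1 (pd1 (oneSoliton p q c))) x y t = q^3 * JG3 q (JTh p q c x y t) := by
  intro x y t
  have hfun : (fun s => pd1 (pd1 (oneSoliton p q c)) s y t)
      = fun s => q^2 * JG2 q (JTh p q c s y t) := funext fun s => pd11_os p q c s y t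
  rw [show pd1 (pd1 (pd1 (oneSoliton p q c))) x y t
      = deriv (fun s => pd1 (pd1 (oneSoliton p q c)) s y t) x from rfl, hfun]
  have h := (((hasDerivAt_JG2 q (JTh p q c x y t)).comp x
      (hTh1 p q c y t x)).const_mul (q^2)).deriv
  exact h.trans (by ring)

lemma pd3_os (p q c : ℝ) : ∀ x y t : ℝ,
    pd3 (oneSoliton p q c) x y t
      = -(q * (q^2 - 3*p^2 - y^2/48 - p*y/2)) * JG1 q (JTh p q c x y t) := by
  intro x y t
  have h := ((hasDerivAt_JG q (JTh p q c x y t)).comp t (hTh3 p q c x y t)).deriv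
  unfold pd3
  exact h.trans (mul_comm _ _)

lemma pd2_os (p q c : ℝ) : ∀ x y t : ℝ,
    pd2 (oneSoliton p q c) x y t
      = (q*t*(y/24 + p/2)) * JG1 q (JTh p q c x y t) := by
  intro x y t
  have h := ((hasDerivAt_JG q (JTh p q c x y t)).comp y (hTh2 p q c x t y)).deriv
  unfold pd2
  exact h.trans (mul_comm _ _)

lemma pd22_os (p q c : ℝ) : ∀ x y t : ℝ,
    pd2 (pd2 (oneSoliton p q c)) x y t
      = (q*t/24) * JG1 q (JTh p q c x y t)
        + (q*t*(y/24 + p/2))^2 * JG2 q (JTh p q c x y t) := by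
  intro x y t
  have hfun : (fun b => pd2 (oneSoliton p q c) x b t)
      = fun b => (q*t*(b/24 + p/2)) * JG1 q (JTh p q c x b t) :=
    funext fun b => pd2_os p q c x b t
  rw [show pd2 (pd2 (oneSoliton p q c)) x y t
      = deriv (fun b => pd2 (oneSoliton p q c) x b t) y from rfl, hfun]
  have h1 : HasDerivAt (fun b : ℝ => q*t*(b/24 + p/2)) (q*t*(1/24)) y := by
    have := (((hasDerivAt_id y).div_const 24).add_const (p/2)).const_mul (q*t)
    simpa using this
  have h2 : HasDerivAt (fun b => JG1 q (JTh p q c x b t))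
      (JG2 q (JTh p q c x y t) * (q*t*(y/24 + p/2))) y :=
    by exact (hasDerivAt_JG1 q (JTh p q c x y t)).comp y (hTh2 p q c x t y)
  have h := (h1.mul h2).deriv
  exact h.trans (by ring)

theorem stmt2 (p q c : ℝ) (hq : 0 < q) (hc : 0 < c) :
    ∀ x y t : ℝ, 0 < t →
      pd1 (fun a b τ =>
          pd3 (oneSoliton p q c) a b τ
          + (1/4) * pd1 (pd1 (pd1 (oneSoliton p q c))) a b τ
          + (3/2) * oneSoliton p q c a b τ * pd1 (oneSoliton p q c) a b τ
          + oneSoliton p q c a b τ / (2 * τ)) x y t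
      = (12 / t^2) * pd2 (pd2 (oneSoliton p q c)) x y t := by
  intro x y t ht
  have hfun : (fun a => pd3 (oneSoliton p q c) a y t
      + (1/4) * pd1 (pd1 (pd1 (oneSoliton p q c))) a y t
      + (3/2) * oneSoliton p q c a y t * pd1 (oneSoliton p q c) a y t
      + oneSoliton p q c a y t / (2*t))
      = fun a => -(q*(q^2 - 3*p^2 - y^2/48 - p*y/2)) * JG1 q (JTh p q c a y t)
        + (1/4) * (q^3 * JG3 q (JTh p q c a y t))
        + (3/2) * JG q (JTh p q c a y t) * (q * JG1 q (JTh p q c a y t))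
        + JG q (JTh p q c a y t) / (2*t) := by
    funext a
    rw [pd3_os, pd111_os, pd1_os, os_eq]
  rw [show pd1 (fun a b τ =>
          pd3 (oneSoliton p q c) a b τ
          + (1/4) * pd1 (pd1 (pd1 (oneSoliton p q c))) a b τ
          + (3/2) * oneSoliton p q c a b τ * pd1 (oneSoliton p q c) a b τ
          + oneSoliton p q c a b τ / (2 * τ)) x y t
      = deriv (fun a => pd3 (oneSoliton p q c) a y t
          + (1/4) * pd1 (pd1 (pd1 (oneSoliton p q c))) a y t
          + (3/2) * oneSoliton p q c a y t * pd1 (oneSoliton p q c) a y t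
          + oneSoliton p q c a y t / (2*t)) x from rfl, hfun, pd22_os]
  set θ := JTh p q c x y t with hθ
  have T1 := ((hasDerivAt_JG1 q θ).comp x
      (hTh1 p q c y t x)).const_mul (-(q*(q^2 - 3*p^2 - y^2/48 - p*y/2)))
  have T2 := (((hasDerivAt_JG3 q θ).comp x
      (hTh1 p q c y t x)).const_mul (q^3)).const_mul ((1:ℝ)/4)
  have T3 := (((hasDerivAt_JG q θ).comp x (hTh1 p q c y t x)).const_mul ((3:ℝ)/2)).mul
      (((hasDerivAt_JG1 q θ).comp x (hTh1 p q c y t x)).const_mul q)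
  have T4 := ((hasDerivAt_JG q θ).comp x (hTh1 p q c y t x)).div_const (2*t)
  have hD := ((T1.add T2).add T3).add T4
  refine hD.deriv.trans ?_
  have hC : Real.cosh θ ≠ 0 := (Real.cosh_pos θ).ne'
  have hS : Real.sinh θ ^ 2 = Real.cosh θ ^ 2 - 1 := Real.sinh_sq θ
  simp only [Function.comp_apply, ← hθ]
  simp only [JG, JG1, JG2, JG3, JG4]
  set C := Real.cosh θ with hCdef
  set S := Real.sinh θ with hSdef
  field_simp
  linear_combination (q^3*t*(26542080*S^2 - 5308416*C^2)) * hS
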